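/- Let S = (S_n)_{n\ge 0} be the simple random walk on \mathbb{Z}^2 started at 0, and let S_n^{(1)} denote the first coordinate of S_n. For every y \in \mathbb{R}, \lim_{N\to\infty} (1/N) \log E[\exp(y S_N^{(1)}) \, ; \, S_n \ne 0 \text{ for all } n = 1,\dots,N] = \log\big( (\cosh(y) + 1)/2 \big). -/

import Mathlib

open Filter Finset

noncomputable section
open scoped Classical

/-- The four possible increments of the simple random walk on `ℤ²`. -/
def step2 : Fin 4 → ℤ × ℤ := ![(1, 0), (-1, 0), (0, 1), (0, -1)]

/-- Position of the two-dimensional walk after `n` steps, given the increments `ξ`. -/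
def pos2 {N : ℕ} (ξ : Fin N → Fin 4) (n : ℕ) : ℤ × ℤ :=
  ∑ i : Fin N, if (i : ℕ) < n then step2 (ξ i) else 0

/-- The pinning partition function of the `(2+1)`-dimensional model with charges
`ω`, inverse temperature `β` and force `f` pulling in the first direction. -/
def Z2 (ω : ℕ → ℝ) (β f : ℝ) (N : ℕ) : ℝ :=
  ∑ ξ : Fin N → Fin 4,
    (1 / 4 : ℝ) ^ N *
      Real.exp (β * ∑ n ∈ Finset.Icc 1 N, (if pos2 ξ n = 0 then ω n else 0)
        + β * f * (((pos2 ξ N).1 : ℤ) : ℝ))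

/-- `g₂(y) = log((cosh y + 1)/2)`. -/
def g2 (y : ℝ) : ℝ := Real.log ((Real.cosh y + 1) / 2)

/-- `K(n) = P(τ = n)`, the law of the first return time to the origin of the
simple random walk on `ℤ²`. -/
def K2 (n : ℕ) : ℝ :=
  ∑ ξ : Fin n → Fin 4,
    if 1 ≤ n ∧ (∀ m ∈ Finset.Ico 1 n, pos2 ξ m ≠ 0) ∧ pos2 ξ n = 0 then (1 / 4 : ℝ) ^ n
    else 0

/-- `E[exp(y S_N^{(1)}); S_n ≠ 0 for n = 1, …, N]` for the simple random walk on `ℤ²`. -/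
def Zfree2 (y : ℝ) (N : ℕ) : ℝ :=
  ∑ ξ : Fin N → Fin 4,
    if ∀ n ∈ Finset.Icc 1 N, pos2 ξ n ≠ 0 then
      (1 / 4 : ℝ) ^ N * Real.exp (y * (((pos2 ξ N).1 : ℤ) : ℝ))
    else 0

/- ### auxiliary -/

def xc : Fin 4 → ℤ := ![1, -1, 0, 0]

lemma step2_fst (s : Fin 4) : (step2 s).1 = xc s := by
  fin_cases s <;> rfl

def wt (y : ℝ) (s : Fin 4) : ℝ := (1 / 4 : ℝ) * Real.exp (y * (xc s : ℤ))

def MM (y : ℝ) : ℝ := (Real.cosh y + 1) / 2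

lemma wt_pos (y : ℝ) (s : Fin 4) : 0 < wt y s := by
  unfold wt; positivity

lemma sum_wt (y : ℝ) : ∑ s : Fin 4, wt y s = MM y := by
  simp only [Fin.sum_univ_four, wt, xc, MM, Real.cosh_eq]
  norm_num
  rw [show (![1, -1, 0, 0] : Fin 4 → ℤ) 2 = 0 from rfl, show (![1, -1, 0, 0] : Fin 4 → ℤ) 3 = 0 from rfl]
  simp only [Int.cast_zero, mul_zero, Real.exp_zero]
  ring

lemma sum_wt_inv (y : ℝ) : ∑ s : Fin 4, wt y s * Real.exp (-(y * (xc s : ℤ))) = 1 := by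
  have h : ∀ a : ℝ, Real.exp a * Real.exp (-a) = 1 := fun a => by
    rw [← Real.exp_add]; simp
  simp only [Fin.sum_univ_four, wt, mul_assoc, h, mul_one]
  norm_num

lemma one_le_MM (y : ℝ) : 1 ≤ MM y := by
  have := Real.one_le_cosh y
  unfold MM; linarith

lemma MM_pos (y : ℝ) : 0 < MM y := lt_of_lt_of_le one_pos (one_le_MM y)

/- ### the 1D walk -/

def Wk {m : ℕ} (η : Fin m → Fin 4) (n : ℕ) : ℤ :=
  ∑ i : Fin m, if (i : ℕ) < n then xc (η i) else 0

lemma Wk_zero {m : ℕ} (η : Fin m → Fin 4) : Wk η 0 = 0 := by simp [Wk]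

lemma Wk_cons {m : ℕ} (s : Fin 4) (η : Fin m → Fin 4) (n : ℕ) :
    Wk (Fin.cons s η) (n + 1) = xc s + Wk η n := by
  rw [Wk, Fin.sum_univ_succ]
  simp only [Fin.cons_zero, Fin.cons_succ, Fin.val_zero, Nat.zero_lt_succ, if_pos,
    Fin.val_succ, Nat.succ_lt_succ_iff, Wk]

lemma sum_pi_succ {m : ℕ} (f : (Fin (m + 1) → Fin 4) → ℝ) :
    ∑ ξ : Fin (m + 1) → Fin 4, f ξ = ∑ s : Fin 4, ∑ η : Fin m → Fin 4, f (Fin.cons s η) := by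
  rw [← Fintype.sum_equiv (Fin.consEquiv fun _ => Fin 4) (fun p => f (Fin.cons p.1 p.2)) f
    (fun p => rfl), Fintype.sum_prod_type]

lemma prod_wt {m : ℕ} (y : ℝ) (η : Fin m → Fin 4) :
    ∏ i, wt y (η i) = (1 / 4 : ℝ) ^ m * Real.exp (y * (Wk η m : ℤ)) := by
  have : Wk η m = ∑ i : Fin m, xc (η i) := by
    unfold Wk; exact Finset.sum_congr rfl fun i _ => if_pos i.isLt
  rw [this]
  push_cast
  rw [Finset.mul_sum, Real.exp_sum, ← Fin.prod_const m ((1:ℝ)/4), ← Finset.prod_mul_distrib]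
  rfl

def Tot (y : ℝ) (m : ℕ) : ℝ := ∑ η : Fin m → Fin 4, ∏ i, wt y (η i)

lemma tot_eq (y : ℝ) (m : ℕ) : Tot y m = MM y ^ m := by
  induction m with
  | zero => simp [Tot]
  | succ m ih =>
      rw [Tot, sum_pi_succ]
      have : ∀ s : Fin 4, ∑ η : Fin m → Fin 4, ∏ i, wt y ((Fin.cons s η : Fin (m+1) → Fin 4) i)
          = wt y s * Tot y m := by
        intro s
        rw [Tot, Finset.mul_sum]
        refine Finset.sum_congr rfl fun η _ => ?_
        rw [Fin.prod_univ_succ]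
        simp [Fin.cons_succ, Fin.cons_zero]
      simp only [this, ih, ← Finset.sum_mul, sum_wt]
      ring

/- ### the bad set: hitting low levels -/

def Bd (y : ℝ) (m : ℕ) (j : ℤ) : ℝ :=
  ∑ η : Fin m → Fin 4, if ∃ n ≤ m, j + Wk η n ≤ 0 then ∏ i, wt y (η i) else 0

def Gd (y : ℝ) (m : ℕ) (j : ℤ) : ℝ :=
  ∑ η : Fin m → Fin 4, if ∀ n ≤ m, 0 < j + Wk η n then ∏ i, wt y (η i) else 0

lemma gd_add_bd (y : ℝ) (m : ℕ) (j : ℤ) : Gd y m j + Bd y m j = Tot y m := by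
  rw [Gd, Bd, Tot, ← Finset.sum_add_distrib]
  refine Finset.sum_congr rfl fun η _ => ?_
  by_cases h : ∃ n ≤ m, j + Wk η n ≤ 0
  · rw [if_pos h, if_neg, zero_add]
    intro hall
    obtain ⟨n, hn, hle⟩ := h
    exact absurd (hall n hn) (not_lt.2 hle)
  · rw [if_pos, if_neg h, add_zero]
    push_neg at h
    exact fun n hn => h n hn

lemma bd_le_tot (y : ℝ) (m : ℕ) (j : ℤ) : Bd y m j ≤ Tot y m := by
  rw [Bd, Tot]
  refine Finset.sum_le_sum fun η _ => ?_
  split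
  · exact le_refl _
  · exact Finset.prod_nonneg fun i _ => (wt_pos y (η i)).le

lemma bd_le (y : ℝ) (hy : 0 ≤ y) : ∀ m : ℕ, ∀ j : ℤ, Bd y m j ≤ Real.exp (-(y * j)) * MM y ^ m := by
  intro m
  induction m with
  | zero =>
      intro j
      have : Bd y 0 j = if j ≤ 0 then 1 else 0 := by
        rw [Bd]
        rw [Finset.sum_eq_single (fun i => i.elim0)]
        · simp only [Nat.le_zero]
          by_cases h : j ≤ 0
          · rw [if_pos ⟨0, rfl, by simpa [Wk_zero]⟩, if_pos h]
            simp
          · rw [if_neg, if_neg h]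
            rintro ⟨n, rfl, hn⟩
            rw [Wk_zero, add_zero] at hn
            exact h hn
        · intro b _ hb; exact absurd (funext fun i => i.elim0) hb
        · intro h; exact absurd (Finset.mem_univ _) h
      rw [this]
      by_cases h : j ≤ 0
      · rw [if_pos h]
        simp only [pow_zero, mul_one]
        rw [show (1:ℝ) = Real.exp 0 by simp]
        apply Real.exp_le_exp.2
        have hj' : (j:ℝ) ≤ 0 := by exact_mod_cast h
        nlinarith
      · rw [if_neg h]
        exact mul_nonneg (Real.exp_nonneg _) (pow_nonneg (MM_pos y).le _)
  | succ m ih =>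
      intro j
      by_cases hj : j ≤ 0
      · calc Bd y (m+1) j ≤ Tot y (m+1) := bd_le_tot y (m+1) j
          _ = 1 * MM y ^ (m+1) := by rw [tot_eq, one_mul]
          _ ≤ Real.exp (-(y * j)) * MM y ^ (m+1) := by
              apply mul_le_mul_of_nonneg_right _ (pow_nonneg (MM_pos y).le _)
              rw [show (1:ℝ) = Real.exp 0 by simp]
              apply Real.exp_le_exp.2
              have : (j:ℝ) ≤ 0 := by exact_mod_cast hj
              nlinarith
      · push_neg at hj
        have step : Bd y (m+1) j = ∑ s : Fin 4, wt y s * Bd y m (j + xc s) := by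
          rw [Bd, sum_pi_succ]
          refine Finset.sum_congr rfl fun s _ => ?_
          rw [Bd, Finset.mul_sum]
          refine Finset.sum_congr rfl fun η _ => ?_
          have hcond : (∃ n ≤ m + 1, j + Wk (Fin.cons s η) n ≤ 0) ↔
              (∃ n ≤ m, (j + xc s) + Wk η n ≤ 0) := by
            constructor
            · rintro ⟨n, hn, hle⟩
              match n with
              | 0 => rw [Wk_zero, add_zero] at hle; omega
              | (n'+1) =>
                  rw [Wk_cons] at hle
                  exact ⟨n', by omega, by omega⟩
            · rintro ⟨n', hn', hle⟩
              exact ⟨n' + 1, by omega, by rw [Wk_cons]; omega⟩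
          have hprod : ∏ i, wt y ((Fin.cons s η : Fin (m+1) → Fin 4) i)
              = wt y s * ∏ i, wt y (η i) := by
            rw [Fin.prod_univ_succ]
            simp [Fin.cons_succ, Fin.cons_zero]
          simp only [mul_ite, mul_zero]
          exact if_congr hcond hprod rfl
        rw [step]
        calc ∑ s : Fin 4, wt y s * Bd y m (j + xc s)
            ≤ ∑ s : Fin 4, wt y s * (Real.exp (-(y * (j + xc s))) * MM y ^ m) := by
              refine Finset.sum_le_sum fun s _ => ?_
              have ihs := ih (j + xc s)
              push_cast at ihs
              exact mul_le_mul_of_nonneg_left ihs (wt_pos y s).le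
          _ = (∑ s : Fin 4, wt y s * Real.exp (-(y * (xc s : ℤ)))) *
                (Real.exp (-(y * j)) * MM y ^ m) := by
              rw [Finset.sum_mul]
              refine Finset.sum_congr rfl fun s _ => ?_
              have : Real.exp (-(y * ((j:ℝ) + (xc s : ℤ)))) =
                  Real.exp (-(y * ((xc s : ℤ):ℝ))) * Real.exp (-(y * (j:ℝ))) := by
                rw [← Real.exp_add]; ring_nf
              rw [this]; ring
          _ = Real.exp (-(y * j)) * MM y ^ m := by rw [sum_wt_inv, one_mul]
          _ ≤ Real.exp (-(y * j)) * MM y ^ (m+1) := by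
              apply mul_le_mul_of_nonneg_left _ (Real.exp_nonneg _)
              apply pow_le_pow_right₀ (one_le_MM y) (by omega)

lemma gd_ge (y : ℝ) (hy : 0 ≤ y) (m : ℕ) (j : ℤ) :
    (1 - Real.exp (-(y * j))) * MM y ^ m ≤ Gd y m j := by
  have h := gd_add_bd y m j
  have h2 := bd_le y hy m j
  rw [tot_eq] at h
  nlinarith [MM_pos y, pow_pos (MM_pos y) m]

/- ### connecting with pos2 -/

def ext4 {m : ℕ} (η : Fin m → Fin 4) : ℕ → Fin 4 :=
  fun i => if h : i < m then η ⟨i, h⟩ else 0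

lemma Wk_eq_range {m : ℕ} (η : Fin m → Fin 4) (n : ℕ) (hn : n ≤ m) :
    Wk η n = ∑ i ∈ Finset.range n, xc (ext4 η i) := by
  have h1 : Wk η n = ∑ i ∈ Finset.range m, (if i < n then xc (ext4 η i) else 0) := by
    rw [Wk, ← Fin.sum_univ_eq_sum_range (fun j => if j < n then xc (ext4 η j) else 0) m]
    exact Finset.sum_congr rfl fun i _ => by simp [ext4, i.isLt]
  rw [h1, ← Finset.sum_subset (Finset.range_subset_range.2 hn)
      (fun x _ hx => if_neg (by simp at hx; omega))]
  exact Finset.sum_congr rfl fun i hi => if_pos (Finset.mem_range.1 hi)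

lemma pos2_fst {N : ℕ} (ξ : Fin N → Fin 4) (n : ℕ) : (pos2 ξ n).1 = Wk ξ n := by
  rw [pos2, Prod.fst_sum, Wk]
  refine Finset.sum_congr rfl fun i _ => ?_
  split
  · exact step2_fst _
  · rfl

def embk (k N : ℕ) (η : Fin (N - k) → Fin 4) : Fin N → Fin 4 :=
  fun i => if (i : ℕ) < k then 0 else ext4 η ((i : ℕ) - k)

lemma embk_inj (k N : ℕ) : Function.Injective (embk k N) := by
  intro η η' h
  funext i'
  have hi : (i' : ℕ) + k < N := by have := i'.isLt; omega
  have h2 : ∀ (θ : Fin (N - k) → Fin 4), embk k N θ ⟨(i' : ℕ) + k, hi⟩ = θ i' := by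
    intro θ
    simp only [embk, ext4]
    rw [if_neg (by omega), Nat.add_sub_cancel, dif_pos i'.isLt]
  have := congrFun h ⟨(i' : ℕ) + k, hi⟩
  rwa [h2, h2] at this

lemma Wk_embk (k N : ℕ) (hk : k ≤ N) (η : Fin (N - k) → Fin 4) (n : ℕ) (hn : n ≤ N) :
    Wk (embk k N η) n = if n ≤ k then (n : ℤ) else (k : ℤ) + Wk η (n - k) := by
  rw [Wk_eq_range _ n hn]
  have hext : ∀ i, i < N → ext4 (embk k N η) i
      = if i < k then 0 else ext4 η (i - k) := by
    intro i hi
    simp [ext4, embk, hi]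
  have key : ∀ i ∈ Finset.range n, xc (ext4 (embk k N η) i)
      = if i < k then 1 else xc (ext4 η (i - k)) := by
    intro i hi
    have hi' : i < N := lt_of_lt_of_le (Finset.mem_range.1 hi) hn
    rw [hext i hi']
    split
    · rfl
    · rfl
  rw [Finset.sum_congr rfl key]
  by_cases hnk : n ≤ k
  · rw [if_pos hnk]
    rw [Finset.sum_congr rfl (fun i hi =>
      if_pos (lt_of_lt_of_le (Finset.mem_range.1 hi) hnk))]
    simp
  · rw [if_neg hnk]
    push_neg at hnk
    rw [← Finset.sum_range_add_sum_Ico _ (le_of_lt hnk)]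
    have p1 : ∑ i ∈ Finset.range k, (if i < k then (1 : ℤ) else xc (ext4 η (i - k))) = k := by
      rw [Finset.sum_congr rfl fun i hi => if_pos (Finset.mem_range.1 hi)]
      simp
    have p2 : ∑ i ∈ Finset.Ico k n, (if i < k then (1 : ℤ) else xc (ext4 η (i - k)))
        = Wk η (n - k) := by
      rw [Finset.sum_congr rfl fun i hi => if_neg (by have := Finset.mem_Ico.1 hi; omega)]
      rw [Finset.sum_Ico_eq_sum_range, Wk_eq_range η (n - k) (by omega)]
      exact Finset.sum_congr rfl fun i hi => by rw [Nat.add_sub_cancel_left]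
    rw [p1, p2]

def Zsummand (y : ℝ) (N : ℕ) (ξ : Fin N → Fin 4) : ℝ :=
  if ∀ n ∈ Finset.Icc 1 N, pos2 ξ n ≠ 0 then
    (1 / 4 : ℝ) ^ N * Real.exp (y * (((pos2 ξ N).1 : ℤ) : ℝ)) else 0

lemma zsummand_nonneg (y : ℝ) (N : ℕ) (ξ : Fin N → Fin 4) : 0 ≤ Zsummand y N ξ := by
  unfold Zsummand
  split
  · positivity
  · exact le_refl _

lemma zfree2_eq (y : ℝ) (N : ℕ) : Zfree2 y N = ∑ ξ : Fin N → Fin 4, Zsummand y N ξ := by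
  rw [Zfree2]
  refine Finset.sum_congr rfl fun ξ _ => ?_
  by_cases h : ∀ n ∈ Finset.Icc 1 N, pos2 ξ n ≠ 0
  · rw [if_pos h, Zsummand, if_pos h]
  · rw [if_neg h, Zsummand, if_neg h]

lemma zfree2_upper (y : ℝ) (N : ℕ) : Zfree2 y N ≤ MM y ^ N := by
  rw [← tot_eq, zfree2_eq, Tot]
  refine Finset.sum_le_sum fun ξ _ => ?_
  rw [prod_wt]
  unfold Zsummand
  split
  · exact le_of_eq (by rw [pos2_fst])
  · positivity

lemma zfree2_pos (y : ℝ) (N : ℕ) : 0 < Zfree2 y N := by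
  rw [zfree2_eq]
  refine Finset.sum_pos' (fun ξ _ => zsummand_nonneg y N ξ)
    ⟨(fun _ => 0), Finset.mem_univ _, ?_⟩
  rw [Zsummand, if_pos]
  · positivity
  · intro n hn h0
    obtain ⟨h1, h2⟩ := Finset.mem_Icc.1 hn
    have hfst : (pos2 (fun _ : Fin N => (0 : Fin 4)) n).1 = 0 := by rw [h0]; rfl
    rw [pos2_fst] at hfst
    have hW : Wk (fun _ : Fin N => (0 : Fin 4)) n = n := by
      rw [Wk_eq_range _ n h2]
      have he : ∀ i ∈ Finset.range n, xc (ext4 (fun _ : Fin N => (0 : Fin 4)) i) = 1 := by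
        intro i hi
        have : ext4 (fun _ : Fin N => (0 : Fin 4)) i = 0 := by
          unfold ext4; split <;> rfl
        rw [this]; rfl
      rw [Finset.sum_congr rfl he]
      simp
    rw [hW] at hfst
    have : n = 0 := by exact_mod_cast hfst
    omega

lemma zfree2_lower (y : ℝ) (hy : 0 ≤ y) (k N : ℕ) (hk : k ≤ N) :
    (Real.exp y / 4) ^ k * ((1 - Real.exp (-(y * k))) * MM y ^ (N - k)) ≤ Zfree2 y N := by
  have step1 : ∑ η : Fin (N - k) → Fin 4, Zsummand y N (embk k N η) ≤ Zfree2 y N := by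
    rw [zfree2_eq, ← Finset.sum_image (fun a _ b _ h => embk_inj k N h)]
    exact Finset.sum_le_sum_of_subset_of_nonneg (Finset.subset_univ _)
      (fun ξ _ _ => zsummand_nonneg y N ξ)
  have step2 : ∀ η : Fin (N - k) → Fin 4,
      (if ∀ n ≤ N - k, 0 < (k : ℤ) + Wk η n then
        (Real.exp y / 4) ^ k * ∏ i, wt y (η i) else 0) ≤ Zsummand y N (embk k N η) := by
    intro η
    by_cases hc : ∀ n ≤ N - k, 0 < (k : ℤ) + Wk η n
    · rw [if_pos hc]
      have hpos : ∀ n ∈ Finset.Icc 1 N, pos2 (embk k N η) n ≠ 0 := by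
        intro n hn h0
        obtain ⟨h1, h2⟩ := Finset.mem_Icc.1 hn
        have hfst : (pos2 (embk k N η) n).1 = 0 := by rw [h0]; rfl
        rw [pos2_fst, Wk_embk k N hk η n h2] at hfst
        by_cases hnk : n ≤ k
        · rw [if_pos hnk] at hfst
          have : n = 0 := by exact_mod_cast hfst
          omega
        · rw [if_neg hnk] at hfst
          have := hc (n - k) (by omega)
          omega
      have hWN : Wk (embk k N η) N = (k : ℤ) + Wk η (N - k) := by
        rw [Wk_embk k N hk η N le_rfl]
        split
        · have hkN : k = N := by omega
          subst hkN
          simp [Wk_zero]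
        · rfl
      have hFval : Zsummand y N (embk k N η)
          = (1 / 4 : ℝ) ^ N * Real.exp ((k : ℝ) * y + y * ((Wk η (N - k) : ℤ) : ℝ)) := by
        rw [Zsummand, if_pos hpos, pos2_fst, hWN]
        congr 1
        push_cast
        ring
      rw [hFval, prod_wt]
      apply le_of_eq
      rw [Real.exp_add, div_pow, ← Real.exp_nat_mul,
        show ((1 : ℝ) / 4) ^ N = (1 / 4) ^ k * (1 / 4) ^ (N - k) from by
          rw [← pow_add]; congr 1; omega]
      simp only [one_div, inv_pow]
      ring
    · rw [if_neg hc]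
      exact zsummand_nonneg y N _
  calc (Real.exp y / 4) ^ k * ((1 - Real.exp (-(y * k))) * MM y ^ (N - k))
      ≤ (Real.exp y / 4) ^ k * Gd y (N - k) (k : ℤ) := by
        apply mul_le_mul_of_nonneg_left _ (by positivity)
        have h := gd_ge y hy (N - k) (k : ℤ)
        have hcast : ((k : ℤ) : ℝ) = (k : ℝ) := by push_cast; rfl
        rw [hcast] at h
        exact h
    _ = ∑ η : Fin (N - k) → Fin 4, (if ∀ n ≤ N - k, 0 < (k : ℤ) + Wk η n then
          (Real.exp y / 4) ^ k * ∏ i, wt y (η i) else 0) := by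
        rw [Gd, Finset.mul_sum]
        exact Finset.sum_congr rfl fun η _ => by rw [mul_ite, mul_zero]
    _ ≤ ∑ η : Fin (N - k) → Fin 4, Zsummand y N (embk k N η) :=
        Finset.sum_le_sum fun η _ => step2 η
    _ ≤ Zfree2 y N := step1

/- ### symmetry in y -/

def yc : Fin 4 → ℤ := ![0, 0, 1, -1]

lemma pos2_snd {N : ℕ} (ξ : Fin N → Fin 4) (n : ℕ) :
    (pos2 ξ n).2 = ∑ i : Fin N, if (i : ℕ) < n then yc (ξ i) else 0 := by
  rw [pos2, Prod.snd_sum]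
  refine Finset.sum_congr rfl fun i _ => ?_
  split
  · rename_i h
    revert h
    generalize ξ i = s
    intro _
    fin_cases s <;> rfl
  · rfl

lemma xc_swap : ∀ s : Fin 4, xc (Equiv.swap (0 : Fin 4) 1 s) = -xc s := by decide
lemma yc_swap : ∀ s : Fin 4, yc (Equiv.swap (0 : Fin 4) 1 s) = yc s := by decide

lemma zfree2_neg (y : ℝ) (N : ℕ) : Zfree2 (-y) N = Zfree2 y N := by
  rw [zfree2_eq, zfree2_eq]
  have hinv : Function.Involutive
      (fun (ξ : Fin N → Fin 4) => (fun i => Equiv.swap (0 : Fin 4) 1 (ξ i))) :=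
    fun ξ => funext fun i => Equiv.swap_apply_self _ _ _
  refine Fintype.sum_bijective _ hinv.bijective _ _ fun ξ => ?_
  have h1 : ∀ n, (pos2 (fun i => Equiv.swap (0 : Fin 4) 1 (ξ i)) n).1 = -(pos2 ξ n).1 := by
    intro n
    rw [pos2_fst, pos2_fst, Wk, Wk, ← Finset.sum_neg_distrib]
    refine Finset.sum_congr rfl fun i _ => ?_
    by_cases h : (i : ℕ) < n
    · rw [if_pos h, if_pos h, xc_swap (ξ i)]
    · rw [if_neg h, if_neg h, neg_zero]
  have h2 : ∀ n, (pos2 (fun i => Equiv.swap (0 : Fin 4) 1 (ξ i)) n).2 = (pos2 ξ n).2 := by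
    intro n
    rw [pos2_snd, pos2_snd]
    refine Finset.sum_congr rfl fun i _ => ?_
    by_cases h : (i : ℕ) < n
    · rw [if_pos h, if_pos h, yc_swap (ξ i)]
    · rw [if_neg h, if_neg h]
  have hiff : ∀ n, (pos2 (fun i => Equiv.swap (0 : Fin 4) 1 (ξ i)) n = 0 ↔ pos2 ξ n = 0) := by
    intro n
    rw [Prod.ext_iff, Prod.ext_iff, h1, h2]
    simp [neg_eq_zero]
  unfold Zsummand
  by_cases h : ∀ n ∈ Finset.Icc 1 N, pos2 ξ n ≠ 0
  · rw [if_pos h, if_pos (fun n hn h0 => h n hn ((hiff n).1 h0))]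
    rw [h1]
    congr 1
    push_cast
    ring
  · rw [if_neg h, if_neg (fun hall => h (fun n hn h0 => (hall n hn) ((hiff n).2 h0)))]

/- ### Cauchy-Schwarz -/

lemma zfree2_sq_le (ε : ℝ) (N : ℕ) :
    Zfree2 ε N ^ 2 ≤ Zfree2 0 N * Zfree2 (2 * ε) N := by
  have key : ∀ ξ : Fin N → Fin 4, Zsummand ε N ξ
      = Real.sqrt (Zsummand 0 N ξ) * Real.sqrt (Zsummand (2 * ε) N ξ) := by
    intro ξ
    unfold Zsummand
    split
    · rw [← Real.sqrt_mul (by positivity)]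
      have hc : (1 / 4 : ℝ) ^ N * Real.exp (0 * (((pos2 ξ N).1 : ℤ) : ℝ)) *
          ((1 / 4 : ℝ) ^ N * Real.exp (2 * ε * (((pos2 ξ N).1 : ℤ) : ℝ)))
          = ((1 / 4 : ℝ) ^ N * Real.exp (ε * (((pos2 ξ N).1 : ℤ) : ℝ))) ^ 2 := by
        have he : Real.exp (2 * ε * (((pos2 ξ N).1 : ℤ) : ℝ))
            = Real.exp (ε * (((pos2 ξ N).1 : ℤ) : ℝ)) * Real.exp (ε * (((pos2 ξ N).1 : ℤ) : ℝ)) := by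
          rw [← Real.exp_add]; ring_nf
        rw [he, zero_mul, Real.exp_zero]
        ring
      rw [hc]
      exact (Real.sqrt_sq (by positivity)).symm
    · simp
  rw [zfree2_eq, zfree2_eq, zfree2_eq]
  rw [Finset.sum_congr rfl fun ξ _ => key ξ]
  have hcs := Finset.sum_mul_sq_le_sq_mul_sq Finset.univ
    (fun ξ : Fin N → Fin 4 => Real.sqrt (Zsummand 0 N ξ))
    (fun ξ : Fin N → Fin 4 => Real.sqrt (Zsummand (2 * ε) N ξ))
  calc (∑ ξ : Fin N → Fin 4, Real.sqrt (Zsummand 0 N ξ) * Real.sqrt (Zsummand (2 * ε) N ξ)) ^ 2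
      ≤ (∑ ξ : Fin N → Fin 4, Real.sqrt (Zsummand 0 N ξ) ^ 2) *
        ∑ ξ : Fin N → Fin 4, Real.sqrt (Zsummand (2 * ε) N ξ) ^ 2 := hcs
    _ = (∑ ξ : Fin N → Fin 4, Zsummand 0 N ξ) * ∑ ξ : Fin N → Fin 4, Zsummand (2 * ε) N ξ := by
        rw [Finset.sum_congr rfl fun ξ _ => Real.sq_sqrt (zsummand_nonneg 0 N ξ),
          Finset.sum_congr rfl fun ξ _ => Real.sq_sqrt (zsummand_nonneg (2 * ε) N ξ)]

/- ### the limit, positive y -/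

lemma tendsto_pos_case (y : ℝ) (hy : 0 < y) :
    Tendsto (fun N : ℕ => Real.log (Zfree2 y N) / N) atTop (nhds (Real.log (MM y))) := by
  set k : ℕ := ⌈Real.log 2 / y⌉₊ with hkdef
  have hke : Real.exp (-(y * k)) ≤ 1 / 2 := by
    have h1 : Real.log 2 / y ≤ (k : ℝ) := Nat.le_ceil _
    have h2 : Real.log 2 ≤ y * k := by
      rw [div_le_iff₀ hy] at h1; linarith
    calc Real.exp (-(y * k)) ≤ Real.exp (-Real.log 2) := Real.exp_le_exp.2 (by linarith)
      _ = 1 / 2 := by rw [Real.exp_neg, Real.exp_log two_pos]; norm_num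
  set C : ℝ := (Real.exp y / 4) ^ k * (1 / 2) with hC
  have hCpos : 0 < C := by positivity
  have hlow : ∀ N : ℕ, k ≤ N → C * MM y ^ (N - k) ≤ Zfree2 y N := by
    intro N hkN
    have hz := zfree2_lower y hy.le k N hkN
    have h12 : (1 : ℝ) / 2 ≤ 1 - Real.exp (-(y * k)) := by linarith
    calc C * MM y ^ (N - k) = (Real.exp y / 4) ^ k * ((1 / 2) * MM y ^ (N - k)) := by
          rw [hC]; ring
      _ ≤ (Real.exp y / 4) ^ k * ((1 - Real.exp (-(y * k))) * MM y ^ (N - k)) := by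
          apply mul_le_mul_of_nonneg_left _ (by positivity)
          exact mul_le_mul_of_nonneg_right h12 (pow_nonneg (MM_pos y).le _)
      _ ≤ Zfree2 y N := hz
  have hub : ∀ N : ℕ, Real.log (Zfree2 y N) ≤ (N : ℝ) * Real.log (MM y) := by
    intro N
    rw [← Real.log_pow]
    exact Real.log_le_log (zfree2_pos y N) (zfree2_upper y N)
  have hlb : ∀ N : ℕ, k ≤ N →
      Real.log C + ((N : ℝ) - k) * Real.log (MM y) ≤ Real.log (Zfree2 y N) := by
    intro N hkN
    have h := Real.log_le_log (mul_pos hCpos (pow_pos (MM_pos y) _)) (hlow N hkN)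
    rw [Real.log_mul (ne_of_gt hCpos) (ne_of_gt (pow_pos (MM_pos y) _)), Real.log_pow] at h
    have hc : ((N - k : ℕ) : ℝ) = (N : ℝ) - k := by
      have : k ≤ N := hkN
      push_cast [this]
      ring
    rw [hc] at h
    exact h
  have hflow : Tendsto
      (fun N : ℕ => Real.log (MM y) + (Real.log C - (k : ℝ) * Real.log (MM y)) / N)
      atTop (nhds (Real.log (MM y))) := by
    have h := tendsto_const_div_atTop_nhds_zero_nat (Real.log C - (k : ℝ) * Real.log (MM y))
    simpa using tendsto_const_nhds.add h
  refine tendsto_of_tendsto_of_tendsto_of_le_of_le' hflow tendsto_const_nhds ?_ ?_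
  · filter_upwards [eventually_ge_atTop (max k 1)] with N hN
    have hk1 : k ≤ N := le_trans (le_max_left _ _) hN
    have hN1 : 1 ≤ N := le_trans (le_max_right _ _) hN
    have hNpos : (0 : ℝ) < N := by exact_mod_cast hN1
    rw [show Real.log (MM y) + (Real.log C - (k : ℝ) * Real.log (MM y)) / N
        = (Real.log C + ((N : ℝ) - k) * Real.log (MM y)) / N from by
      field_simp
      ring]
    gcongr
    exact hlb N hk1
  · filter_upwards [eventually_ge_atTop 1] with N hN1
    have hNpos : (0 : ℝ) < N := by exact_mod_cast hN1
    rw [div_le_iff₀ hNpos, mul_comm]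
    exact hub N

/- ### the limit, y = 0 -/

lemma MM_zero : MM 0 = 1 := by
  unfold MM
  rw [Real.cosh_zero]
  norm_num

lemma tendsto_zero_case :
    Tendsto (fun N : ℕ => Real.log (Zfree2 0 N) / N) atTop (nhds 0) := by
  have hub : ∀ N : ℕ, Real.log (Zfree2 0 N) ≤ 0 := by
    intro N
    have h := zfree2_upper 0 N
    rw [MM_zero, one_pow] at h
    calc Real.log (Zfree2 0 N) ≤ Real.log 1 := Real.log_le_log (zfree2_pos 0 N) h
      _ = 0 := Real.log_one
  have hlb : ∀ (ε : ℝ) (N : ℕ),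
      2 * Real.log (Zfree2 ε N) - (N : ℝ) * Real.log (MM (2 * ε)) ≤ Real.log (Zfree2 0 N) := by
    intro ε N
    have hsq := zfree2_sq_le ε N
    have h2 : Zfree2 ε N ^ 2 ≤ Zfree2 0 N * MM (2 * ε) ^ N :=
      le_trans hsq (mul_le_mul_of_nonneg_left (zfree2_upper (2 * ε) N) (zfree2_pos 0 N).le)
    have hl := Real.log_le_log (pow_pos (zfree2_pos ε N) 2) h2
    rw [Real.log_pow,
      Real.log_mul (ne_of_gt (zfree2_pos 0 N)) (ne_of_gt (pow_pos (MM_pos _) _)),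
      Real.log_pow] at hl
    push_cast at hl
    linarith
  rw [Metric.tendsto_atTop]
  intro δ hδ
  -- choose ε > 0 with log (MM (2ε)) < δ/2
  have hlogc : ContinuousAt (fun ε : ℝ => Real.log (MM (2 * ε))) 0 := by
    have hMMc : Continuous fun ε : ℝ => MM (2 * ε) := by
      unfold MM
      exact ((Real.continuous_cosh.comp (continuous_const.mul continuous_id)).add
        continuous_const).div_const 2
    have h1 : (fun ε : ℝ => MM (2 * ε)) 0 ≠ 0 := by
      norm_num [MM_zero]
    have h2 := ContinuousAt.comp (g := Real.log) (f := fun ε : ℝ => MM (2 * ε)) (x := 0)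
      (Real.continuousAt_log h1) hMMc.continuousAt
    exact h2
  obtain ⟨δ', hδ', hball⟩ := Metric.continuousAt_iff.1 hlogc (δ / 2) (by linarith)
  set ε : ℝ := δ' / 2 with hε
  have hεpos : 0 < ε := by positivity
  have hεball : dist ε 0 < δ' := by
    rw [Real.dist_eq, sub_zero, abs_of_pos hεpos]
    rw [hε]; linarith
  have hsmall : |Real.log (MM (2 * ε))| < δ / 2 := by
    have h1 := hball hεball
    rw [Real.dist_eq] at h1
    have h0 : Real.log (MM (2 * (0 : ℝ))) = 0 := by
      norm_num [MM_zero]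
    rw [h0, sub_zero] at h1
    exact h1
  have hMM2ε : Real.log (MM (2 * ε)) < δ / 2 := lt_of_le_of_lt (le_abs_self _) hsmall
  -- use the ε-limit
  have hεlim := tendsto_pos_case ε hεpos
  rw [Metric.tendsto_atTop] at hεlim
  obtain ⟨N₀, hN₀⟩ := hεlim (δ / 4) (by linarith)
  refine ⟨max N₀ 1, fun N hN => ?_⟩
  have hNN₀ : N₀ ≤ N := le_trans (le_max_left _ _) hN
  have hN1 : 1 ≤ N := le_trans (le_max_right _ _) hN
  have hNpos : (0 : ℝ) < N := by exact_mod_cast hN1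
  have hεN := hN₀ N hNN₀
  rw [Real.dist_eq] at hεN
  have hMMε : 0 ≤ Real.log (MM ε) := Real.log_nonneg (one_le_MM ε)
  have hfε : -(δ / 4) < Real.log (Zfree2 ε N) / N := by
    have := abs_lt.1 hεN
    linarith [this.1]
  have hlow : -δ < Real.log (Zfree2 0 N) / N := by
    have h := hlb ε N
    have hdiv : (2 * Real.log (Zfree2 ε N) - (N : ℝ) * Real.log (MM (2 * ε))) / N
        ≤ Real.log (Zfree2 0 N) / N := by
      gcongr
    have heq : (2 * Real.log (Zfree2 ε N) - (N : ℝ) * Real.log (MM (2 * ε))) / N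
        = 2 * (Real.log (Zfree2 ε N) / N) - Real.log (MM (2 * ε)) := by
      field_simp
    rw [heq] at hdiv
    linarith
  have hup : Real.log (Zfree2 0 N) / N ≤ 0 :=
    div_nonpos_of_nonpos_of_nonneg (hub N) hNpos.le
  rw [Real.dist_eq, sub_zero]
  exact abs_lt.2 ⟨hlow, lt_of_le_of_lt hup hδ⟩


/-- for the simple random walk on `ℤ²`,
`(1/N) log E[exp(y S_N^{(1)}); S_n ≠ 0, n = 1,…,N] → log((cosh y + 1)/2)`. -/
theorem stmt_17 (y : ℝ) :
    Tendsto (fun N : ℕ => Real.log (Zfree2 y N) / N) atTop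
      (nhds (Real.log ((Real.cosh y + 1) / 2))) := by
  have hMMdef : Real.log ((Real.cosh y + 1) / 2) = Real.log (MM y) := rfl
  rw [hMMdef]
  rcases lt_trichotomy y 0 with hy | hy | hy
  · have h := tendsto_pos_case (-y) (by linarith)
    have hMM : MM (-y) = MM y := by unfold MM; rw [Real.cosh_neg]
    rw [hMM] at h
    have heq : (fun N : ℕ => Real.log (Zfree2 (-y) N) / N)
        = fun N : ℕ => Real.log (Zfree2 y N) / N := by
      funext N
      rw [zfree2_neg]
    rwa [heq] at h
  · subst hy
    have h0 : Real.log (MM 0) = 0 := by rw [MM_zero, Real.log_one]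
    rw [h0]
    exact tendsto_zero_case
  · exact tendsto_pos_case y hy
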